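/- Let 𝒟 ⊂ ℝ^d be a bounded domain, ε ∈ (0,1), Q = (-1/2,1/2)^d, I_ε = {k ∈ ℤ^d : ε(Q+k) ∩ 𝒟 ≠ ∅}, and let 𝒟_ε^c = {x ∈ 𝒟 : dist(x, ∂𝒟) < ε} and J_ε = {j ∈ ℤ^d : ε(Q+j) ∩ 𝒟_ε^c ≠ ∅}. Suppose g ∈ L²_loc(ℝ^d) satisfies |g(y)| ≤ C(1+|y|)^{1-d}. Then there exist ρ > 0 and C' > 0 (independent of ε) such that Σ_{k∈I_ε} ∫_{𝒟_ε^c} g(x/ε − k)² dx ≤ ε^{d} Card(J_ε) ∫_{B(0,ρ/ε)} g² ≤ C' ε R_{d,ε}, where R_{d,ε} = 1 + log(1/ε) if d = 2 and R_{d,ε} = 1 if d ≥ 3. -/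

import Mathlib

open MeasureTheory Metric

namespace BLaux



lemma coord_le_norm {d : ℕ} (x : EuclideanSpace ℝ (Fin d)) (i : Fin d) : |x i| ≤ ‖x‖ := by
  rw [EuclideanSpace.norm_eq, ← Real.sqrt_sq_eq_abs]
  apply Real.sqrt_le_sqrt
  have := Finset.single_le_sum (f := fun j => ‖x j‖ ^ 2) (fun j _ => sq_nonneg _)
    (Finset.mem_univ i)
  simpa [Real.norm_eq_abs, sq_abs] using this

lemma norm_le_of_coords {d : ℕ} {M : ℝ} (hM : 0 ≤ M) {x : EuclideanSpace ℝ (Fin d)}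
    (h : ∀ i, |x i| ≤ M) : ‖x‖ ≤ Real.sqrt d * M := by
  rw [EuclideanSpace.norm_eq]
  have h1 : ∑ i, ‖x i‖ ^ 2 ≤ ∑ _i : Fin d, M ^ 2 := by
    refine Finset.sum_le_sum fun i _ => ?_
    rw [Real.norm_eq_abs]
    exact pow_le_pow_left₀ (abs_nonneg _) (h i) 2
  have h2 : (∑ _i : Fin d, M ^ 2) = (d : ℝ) * M ^ 2 := by
    simp [Finset.sum_const, nsmul_eq_mul]
  calc Real.sqrt (∑ i, ‖x i‖ ^ 2) ≤ Real.sqrt ((d : ℝ) * M ^ 2) := by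
        apply Real.sqrt_le_sqrt; rw [← h2]; exact h1
    _ = Real.sqrt d * M := by
        rw [Real.sqrt_mul (by positivity), Real.sqrt_sq hM]

lemma mcoord {d : ℕ} (i : Fin d) : Measurable fun x : EuclideanSpace ℝ (Fin d) => x i :=
  (EuclideanSpace.proj i).continuous.measurable

lemma cube_meas {d : ℕ} (c : Fin d → ℝ) (r : ℝ) :
    MeasurableSet {x : EuclideanSpace ℝ (Fin d) | ∀ i, |x i - c i| < r} := by
  have h : {x : EuclideanSpace ℝ (Fin d) | ∀ i, |x i - c i| < r}
      = ⋂ i, {x : EuclideanSpace ℝ (Fin d) | |x i - c i| < r} := by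
    ext x; simp
  rw [h]
  exact MeasurableSet.iInter fun i =>
    measurableSet_lt (((mcoord i).sub measurable_const).abs) measurable_const

lemma cube_vol_lt_top {d : ℕ} (c : Fin d → ℝ) {r : ℝ} (hr : 0 ≤ r) :
    volume {x : EuclideanSpace ℝ (Fin d) | ∀ i, |x i - c i| < r} < ⊤ := by
  have hsub : {x : EuclideanSpace ℝ (Fin d) | ∀ i, |x i - c i| < r}
      ⊆ closedBall (show EuclideanSpace ℝ (Fin d) from WithLp.toLp 2 c) (Real.sqrt d * r) := by
    intro x hx
    rw [mem_closedBall, dist_eq_norm]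
    refine norm_le_of_coords hr fun i => ?_
    have hcoord : (x - (show EuclideanSpace ℝ (Fin d) from WithLp.toLp 2 c)) i = x i - c i := rfl
    rw [hcoord]
    exact (hx i).le
  exact lt_of_le_of_lt (measure_mono hsub) measure_closedBall_lt_top

lemma hyperplane_null {d : ℕ} (i : Fin d) (c : ℝ) :
    volume {x : EuclideanSpace ℝ (Fin d) | x i = c} = 0 := by
  have hmp := EuclideanSpace.volume_preserving_symm_measurableEquiv_toLp (Fin d)
  have hs : MeasurableSet {y : Fin d → ℝ | y i = c} :=
    measurableSet_eq_fun (measurable_pi_apply i) measurable_const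
  have h0 : (volume : Measure (Fin d → ℝ)) {y | y i = c} = 0 := by
    have hset : {y : Fin d → ℝ | y i = c}
        = Set.pi Set.univ (fun j => if j = i then ({c} : Set ℝ) else Set.univ) := by
      ext y
      simp only [Set.mem_setOf_eq, Set.mem_pi, Set.mem_univ, forall_true_left]
      constructor
      · intro h j
        by_cases hj : j = i
        · subst hj; simp [h]
        · simp [hj]
      · intro h
        have := h i
        simpa using this
    rw [hset, volume_pi_pi]
    exact Finset.prod_eq_zero (Finset.mem_univ i) (by simp)
  have hpre : {x : EuclideanSpace ℝ (Fin d) | x i = c}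
      = (MeasurableEquiv.toLp 2 (Fin d → ℝ)).symm ⁻¹' {y : Fin d → ℝ | y i = c} := rfl
  rw [hpre, hmp.measure_preimage hs.nullMeasurableSet]
  exact h0

/-- The bad set of points having some coordinate on a dyadic-shifted grid line. -/
def bad (d : ℕ) (ε : ℝ) : Set (EuclideanSpace ℝ (Fin d)) :=
  ⋃ i, ⋃ m : ℤ, {x | x i = ε * m + ε / 2}

lemma bad_null (d : ℕ) (ε : ℝ) : volume (bad d ε) = 0 :=
  measure_iUnion_null fun i => measure_iUnion_null fun m => hyperplane_null i _

lemma round_of_not_bad {d : ℕ} {ε : ℝ} (hε : 0 < ε) {x : EuclideanSpace ℝ (Fin d)}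
    (hx : x ∉ bad d ε) : ∃ j : Fin d → ℤ, ∀ i, |x i - ε * j i| < ε / 2 := by
  refine ⟨fun i => ⌊x i / ε + 1 / 2⌋, fun i => ?_⟩
  set q : ℝ := ((⌊x i / ε + 1 / 2⌋ : ℤ) : ℝ) with hq
  have hfl : q ≤ x i / ε + 1 / 2 := Int.floor_le _
  have hfl2 : x i / ε + 1 / 2 < q + 1 := Int.lt_floor_add_one _
  have hne : q ≠ x i / ε + 1 / 2 := by
    intro hcontra
    apply hx
    refine Set.mem_iUnion.2 ⟨i, Set.mem_iUnion.2 ⟨⌊x i / ε + 1 / 2⌋ - 1, ?_⟩⟩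
    simp only [Set.mem_setOf_eq]
    push_cast
    have hx0 : x i / ε = q - 1 / 2 := by rw [hcontra]; ring
    calc x i = ε * (x i / ε) := by field_simp
      _ = ε * (q - 1) + ε / 2 := by rw [hx0]; ring
  have hlow : q < x i / ε + 1 / 2 := lt_of_le_of_ne hfl hne
  have key : |x i / ε - q| < 1 / 2 := abs_lt.2 ⟨by linarith, by linarith⟩
  have hrw : x i - ε * q = ε * (x i / ε - q) := by field_simp
  rw [hrw, abs_mul, abs_of_pos hε]
  calc ε * |x i / ε - q| < ε * (1 / 2) := by
        exact mul_lt_mul_of_pos_left key hε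
    _ = ε / 2 := by ring




/-- The integer vector as a point of Euclidean space. -/
def ivec {d : ℕ} (k : Fin d → ℤ) : EuclideanSpace ℝ (Fin d) := WithLp.toLp 2 (fun i => (k i : ℝ))

lemma phi_eq {d : ℕ} (ε : ℝ) (k : Fin d → ℤ) :
    (fun x : EuclideanSpace ℝ (Fin d) =>
        (show EuclideanSpace ℝ (Fin d) from WithLp.toLp 2 (fun i => x i / ε - (k i : ℝ))))
      = fun x => ε⁻¹ • x + -(ivec k) := by
  funext x
  ext i
  show x i / ε - (k i : ℝ) = ε⁻¹ * x i + -((k i : ℝ))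
  rw [div_eq_inv_mul]; ring

lemma phi_meas {d : ℕ} (ε : ℝ) (k : Fin d → ℤ) :
    Measurable (fun x : EuclideanSpace ℝ (Fin d) =>
      (show EuclideanSpace ℝ (Fin d) from WithLp.toLp 2 (fun i => x i / ε - (k i : ℝ)))) := by
  rw [phi_eq]
  exact (measurable_const_smul ε⁻¹).add_const _

lemma cov {d : ℕ} {ε : ℝ} (hε : 0 < ε) (k : Fin d → ℤ)
    (t : Set (EuclideanSpace ℝ (Fin d))) (ht : MeasurableSet t)
    (h : EuclideanSpace ℝ (Fin d) → ℝ) (hm : Measurable h) :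
    ∫ x in (fun x : EuclideanSpace ℝ (Fin d) =>
        (show EuclideanSpace ℝ (Fin d) from WithLp.toLp 2 (fun i => x i / ε - (k i : ℝ)))) ⁻¹' t,
      h (show EuclideanSpace ℝ (Fin d) from WithLp.toLp 2 (fun i => x i / ε - (k i : ℝ)))
      = ε ^ d * ∫ y in t, h y := by
  have hφ' : ∀ x : EuclideanSpace ℝ (Fin d),
      (show EuclideanSpace ℝ (Fin d) from WithLp.toLp 2 (fun i => x i / ε - (k i : ℝ)))
        = ε⁻¹ • x + -(ivec k) := fun x => congrFun (phi_eq ε k) x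
  simp only [hφ']
  have hTm : Measurable (fun x : EuclideanSpace ℝ (Fin d) => ε⁻¹ • x + -(ivec k)) :=
    (measurable_const_smul ε⁻¹).add_const _
  have hmap : Measure.map (fun x : EuclideanSpace ℝ (Fin d) => ε⁻¹ • x + -(ivec k)) volume
      = ENNReal.ofReal (ε ^ d) • volume := by
    have h1 : Measure.map (fun x : EuclideanSpace ℝ (Fin d) => ε⁻¹ • x) volume
        = ENNReal.ofReal (ε ^ d) • volume := by
      rw [Measure.map_addHaar_smul volume (inv_ne_zero hε.ne')]
      congr 1
      rw [finrank_euclideanSpace_fin, inv_pow, inv_inv,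
        abs_of_nonneg (pow_nonneg hε.le d)]
    have hcomp : (fun x : EuclideanSpace ℝ (Fin d) => ε⁻¹ • x + -(ivec k))
        = (fun y : EuclideanSpace ℝ (Fin d) => y + -(ivec k))
          ∘ (fun x : EuclideanSpace ℝ (Fin d) => ε⁻¹ • x) := rfl
    rw [hcomp, ← Measure.map_map (measurable_add_const (-(ivec k)))
      (measurable_const_smul ε⁻¹), h1, Measure.map_smul, map_add_right_eq_self]
  calc ∫ x in (fun x : EuclideanSpace ℝ (Fin d) => ε⁻¹ • x + -(ivec k)) ⁻¹' t,
        h (ε⁻¹ • x + -(ivec k)) ∂volume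
      = ∫ y in t, h y ∂(Measure.map
          (fun x : EuclideanSpace ℝ (Fin d) => ε⁻¹ • x + -(ivec k)) volume) :=
        (setIntegral_map ht hm.aestronglyMeasurable hTm.aemeasurable).symm
    _ = ε ^ d * ∫ y in t, h y := by
        rw [hmap, Measure.restrict_smul, integral_smul_measure,
          ENNReal.toReal_ofReal (pow_nonneg hε.le d), smul_eq_mul]

lemma cube_preimage {d : ℕ} {ε : ℝ} (hε : 0 < ε) (j k : Fin d → ℤ) :
    {x : EuclideanSpace ℝ (Fin d) | ∀ i, |x i - ε * (j i : ℝ)| < ε / 2}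
      = (fun x : EuclideanSpace ℝ (Fin d) =>
          (show EuclideanSpace ℝ (Fin d) from WithLp.toLp 2 (fun i => x i / ε - (k i : ℝ)))) ⁻¹'
        {y : EuclideanSpace ℝ (Fin d) | ∀ i, |y i - (((j - k) i : ℤ) : ℝ)| < 1 / 2} := by
  ext x
  simp only [Set.mem_setOf_eq, Set.mem_preimage]
  constructor
  · intro hx i
    show |x i / ε - (k i : ℝ) - (((j - k) i : ℤ) : ℝ)| < 1 / 2
    have e1 : x i / ε - (k i : ℝ) - (((j - k) i : ℤ) : ℝ) = (x i - ε * j i) / ε := by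
      push_cast [Pi.sub_apply]
      field_simp
      ring
    rw [e1, abs_div, abs_of_pos hε, div_lt_iff₀ hε]
    have := hx i
    linarith
  · intro hx i
    have := hx i
    have e1 : x i / ε - (k i : ℝ) - (((j - k) i : ℤ) : ℝ) = (x i - ε * j i) / ε := by
      push_cast [Pi.sub_apply]
      field_simp
      ring
    rw [e1, abs_div, abs_of_pos hε, div_lt_iff₀ hε] at this
    linarith

lemma ucube_disjoint {d : ℕ} {m m' : Fin d → ℤ} (h : m ≠ m') :
    Disjoint {y : EuclideanSpace ℝ (Fin d) | ∀ i, |y i - (m i : ℝ)| < 1 / 2}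
      {y : EuclideanSpace ℝ (Fin d) | ∀ i, |y i - (m' i : ℝ)| < 1 / 2} := by
  rw [Set.disjoint_left]
  intro y h1 h2
  apply h
  funext i
  have hlt : |(m i : ℝ) - m' i| < 1 := by
    calc |(m i : ℝ) - m' i| ≤ |(m i : ℝ) - y i| + |y i - (m' i : ℝ)| := abs_sub_le _ _ _
      _ = |y i - (m i : ℝ)| + |y i - (m' i : ℝ)| := by rw [abs_sub_comm (y i)]; rw [abs_sub_comm (y i)]
      _ < 1 := by have := h1 i; have := h2 i; linarith
  have : |m i - m' i| < 1 := by exact_mod_cast (by push_cast; exact hlt : |((m i - m' i : ℤ) : ℝ)| < 1)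
  have h0 := Int.abs_lt_one_iff.mp this
  omega

lemma cube_disjoint {d : ℕ} {ε : ℝ} (hε : 0 < ε) {j j' : Fin d → ℤ} (h : j ≠ j') :
    Disjoint {x : EuclideanSpace ℝ (Fin d) | ∀ i, |x i - ε * (j i : ℝ)| < ε / 2}
      {x : EuclideanSpace ℝ (Fin d) | ∀ i, |x i - ε * (j' i : ℝ)| < ε / 2} := by
  rw [Set.disjoint_left]
  intro x h1 h2
  apply h
  funext i
  have hlt : |ε * (j i : ℝ) - ε * j' i| < ε := by
    calc |ε * (j i : ℝ) - ε * j' i| ≤ |ε * (j i : ℝ) - x i| + |x i - ε * (j' i : ℝ)| := abs_sub_le _ _ _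
      _ = |x i - ε * (j i : ℝ)| + |x i - ε * (j' i : ℝ)| := by rw [abs_sub_comm (x i)]; rw [abs_sub_comm (x i)]
      _ < ε := by have := h1 i; have := h2 i; linarith
  have hlt2 : |(j i : ℝ) - j' i| < 1 := by
    rw [← mul_sub, abs_mul, abs_of_pos hε] at hlt
    nlinarith [abs_nonneg ((j i : ℝ) - j' i)]
  have : |j i - j' i| < 1 := by exact_mod_cast (by push_cast; exact hlt2 : |((j i - j' i : ℤ) : ℝ)| < 1)
  have h0 := Int.abs_lt_one_iff.mp this
  omega




lemma sq_le_rpow {d : ℕ} (g : EuclideanSpace ℝ (Fin d) → ℝ) (Cg : ℝ)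
    (hgbd : ∀ y, |g y| ≤ Cg * (1 + ‖y‖) ^ ((1 : ℝ) - d)) (y : EuclideanSpace ℝ (Fin d)) :
    (g y) ^ 2 ≤ Cg ^ 2 * (1 + ‖y‖) ^ ((2 : ℝ) - 2 * d) := by
  have h1 := hgbd y
  have h2 : (g y) ^ 2 = |g y| ^ 2 := (sq_abs _).symm
  have h3 : |g y| ^ 2 ≤ (Cg * (1 + ‖y‖) ^ ((1 : ℝ) - d)) ^ 2 :=
    pow_le_pow_left₀ (abs_nonneg _) h1 2
  have h4 : (Cg * (1 + ‖y‖) ^ ((1 : ℝ) - d)) ^ 2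
      = Cg ^ 2 * (1 + ‖y‖) ^ ((2 : ℝ) - 2 * d) := by
    rw [mul_pow]
    congr 1
    rw [← Real.rpow_natCast ((1 + ‖y‖) ^ ((1 : ℝ) - d)) 2,
      ← Real.rpow_mul (by positivity)]
    congr 1
    push_cast
    ring
  rw [h2]; rw [h4] at h3; exact h3

lemma sq_le_const {d : ℕ} (hd : 1 ≤ d) (g : EuclideanSpace ℝ (Fin d) → ℝ) (Cg : ℝ)
    (hCg : 0 ≤ Cg)
    (hgbd : ∀ y, |g y| ≤ Cg * (1 + ‖y‖) ^ ((1 : ℝ) - d)) (y : EuclideanSpace ℝ (Fin d)) :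
    (g y) ^ 2 ≤ Cg ^ 2 := by
  have h1 := sq_le_rpow g Cg hgbd y
  have hdr : (1 : ℝ) ≤ (d : ℝ) := by exact_mod_cast hd
  have h2 : (1 + ‖y‖) ^ ((2 : ℝ) - 2 * d) ≤ 1 :=
    Real.rpow_le_one_of_one_le_of_nonpos (by linarith [norm_nonneg y]) (by linarith)
  nlinarith [sq_nonneg Cg]

lemma ball_sq_integral_bound {d : ℕ} (hd : 2 ≤ d)
    (g : EuclideanSpace ℝ (Fin d) → ℝ) (hgm : Measurable g)
    (Cg : ℝ) (hCg : 0 < Cg)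
    (hgbd : ∀ y, |g y| ≤ Cg * (1 + ‖y‖) ^ ((1 : ℝ) - d))
    (ρ : ℝ) (hρ : 0 < ρ) :
    ∃ CB : ℝ, 0 < CB ∧ ∀ ε : ℝ, ε ∈ Set.Ioo (0 : ℝ) 1 →
      (∫ y in ball (0 : EuclideanSpace ℝ (Fin d)) (ρ / ε), (g y) ^ 2)
        ≤ CB * (if d = 2 then 1 + Real.log (1 / ε) else 1) := by
  haveI : Nontrivial (EuclideanSpace ℝ (Fin d)) := by
    refine ⟨EuclideanSpace.single ⟨0, by omega⟩ 1, 0, fun h => ?_⟩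
    have := congrArg (fun v => v ⟨0, by omega⟩) h
    simp [EuclideanSpace.single_apply] at this
  set V1 : ℝ := (volume (ball (0 : EuclideanSpace ℝ (Fin d)) 1)).toReal with hV1def
  have hV1 : 0 < V1 :=
    ENNReal.toReal_pos (measure_ball_pos volume 0 one_pos).ne' measure_ball_lt_top.ne
  have hlog2 : 0 < Real.log 2 := Real.log_pos one_lt_two
  have hlogρ : 0 ≤ Real.log (1 + ρ) := Real.log_nonneg (by linarith)
  set K : ℝ := Cg ^ 2 * 2 ^ d * V1 with hKdef
  have hK : 0 < K := by positivity
  set K2 : ℝ := Real.log (1 + ρ) / Real.log 2 + 1 / Real.log 2 + 2 with hK2def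
  have hK2 : 0 < K2 := by positivity
  refine ⟨K * (K2 + 2), by positivity, ?_⟩
  rintro ε ⟨hε0, hε1⟩
  have hR : 0 < ρ / ε := by positivity
  set L : ℝ := Real.log (1 / ε) with hLdef
  have h1ε : (1 : ℝ) ≤ 1 / ε := by rw [le_div_iff₀ hε0]; linarith
  have hL : 0 ≤ L := Real.log_nonneg h1ε
  set N : ℕ := ⌈Real.logb 2 (1 + ρ / ε)⌉₊ with hNdef
  set A : ℕ → Set (EuclideanSpace ℝ (Fin d)) := fun n =>
    {y | (2 : ℝ) ^ n ≤ 1 + ‖y‖ ∧ 1 + ‖y‖ < (2 : ℝ) ^ (n + 1)} with hAdef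
  have hAmeas : ∀ n, MeasurableSet (A n) := by
    intro n
    have : A n = {y : EuclideanSpace ℝ (Fin d) | (2 : ℝ) ^ n ≤ 1 + ‖y‖}
        ∩ {y | 1 + ‖y‖ < (2 : ℝ) ^ (n + 1)} := rfl
    rw [this]
    exact (measurableSet_le measurable_const (measurable_const.add measurable_norm)).inter
      (measurableSet_lt (measurable_const.add measurable_norm) measurable_const)
  have hAsub : ∀ n, A n ⊆ ball (0 : EuclideanSpace ℝ (Fin d)) ((2 : ℝ) ^ (n + 1)) := by
    intro n y hy
    rw [mem_ball_zero_iff]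
    have := hy.2
    linarith
  have hAfin : ∀ n, volume (A n) < ⊤ := fun n =>
    (measure_mono (hAsub n)).trans_lt measure_ball_lt_top
  have hAvol : ∀ n, (volume (A n)).toReal ≤ ((2 : ℝ) ^ (n + 1)) ^ d * V1 := by
    intro n
    have h1 : volume (A n) ≤ volume (ball (0 : EuclideanSpace ℝ (Fin d)) ((2 : ℝ) ^ (n + 1))) :=
      measure_mono (hAsub n)
    rw [Measure.addHaar_ball volume 0 (by positivity : (0 : ℝ) ≤ 2 ^ (n + 1)),
      finrank_euclideanSpace_fin] at h1
    have h2 : ENNReal.ofReal (((2 : ℝ) ^ (n + 1)) ^ d)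
        * volume (ball (0 : EuclideanSpace ℝ (Fin d)) 1) ≠ ⊤ :=
      ENNReal.mul_ne_top ENNReal.ofReal_ne_top measure_ball_lt_top.ne
    have h3 := ENNReal.toReal_mono h2 h1
    rwa [ENNReal.toReal_mul, ENNReal.toReal_ofReal (by positivity)] at h3
  have hgsqm : Measurable fun y : EuclideanSpace ℝ (Fin d) => (g y) ^ 2 := hgm.pow_const 2
  have hIntA : ∀ n, IntegrableOn (fun y => (g y) ^ 2) (A n) volume := by
    intro n
    refine Measure.integrableOn_of_bounded (hAfin n).ne hgsqm.aestronglyMeasurable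
      (M := Cg ^ 2) (Filter.Eventually.of_forall fun y => ?_)
    rw [Real.norm_eq_abs, abs_of_nonneg (sq_nonneg _)]
    exact sq_le_const (by omega) g Cg hCg.le hgbd y
  have hIntUnion : IntegrableOn (fun y => (g y) ^ 2)
      (⋃ n ∈ Finset.range (N + 1), A n) volume :=
    integrableOn_finset_iUnion.2 fun n _ => hIntA n
  have hAdisj : ∀ {a b : ℕ}, a ≠ b → Disjoint (A a) (A b) := by
    intro a b hab
    rw [Set.disjoint_left]
    intro y hya hyb
    rcases Nat.lt_or_ge a b with h | h
    · have h1 : (2 : ℝ) ^ (a + 1) ≤ 2 ^ b := pow_le_pow_right₀ one_le_two h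
      have := hya.2; have := hyb.1
      linarith
    · have hba : b < a := lt_of_le_of_ne h (Ne.symm hab)
      have h1 : (2 : ℝ) ^ (b + 1) ≤ 2 ^ a := pow_le_pow_right₀ one_le_two hba
      have := hyb.2; have := hya.1
      linarith
  have hCover : ball (0 : EuclideanSpace ℝ (Fin d)) (ρ / ε)
      ⊆ ⋃ n ∈ Finset.range (N + 1), A n := by
    intro y hy
    have hy' : ‖y‖ < ρ / ε := mem_ball_zero_iff.mp hy
    have ht1 : (1 : ℝ) ≤ 1 + ‖y‖ := by linarith [norm_nonneg y]
    have ht0 : (0 : ℝ) < 1 + ‖y‖ := by linarith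
    have hlognn : 0 ≤ Real.logb 2 (1 + ‖y‖) := Real.logb_nonneg one_lt_two ht1
    set n : ℕ := ⌊Real.logb 2 (1 + ‖y‖)⌋₊ with hn
    have hn1 : (2 : ℝ) ^ n ≤ 1 + ‖y‖ := by
      have h1 : (2 : ℝ) ^ ((n : ℝ)) ≤ 2 ^ Real.logb 2 (1 + ‖y‖) :=
        Real.rpow_le_rpow_of_exponent_le one_le_two (Nat.floor_le hlognn)
      rw [Real.rpow_natCast] at h1
      rwa [Real.rpow_logb two_pos (by norm_num) ht0] at h1
    have hn2 : 1 + ‖y‖ < (2 : ℝ) ^ (n + 1) := by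
      have h1 : Real.logb 2 (1 + ‖y‖) < (n : ℝ) + 1 := Nat.lt_floor_add_one _
      have h2 : (2 : ℝ) ^ Real.logb 2 (1 + ‖y‖) < 2 ^ ((n : ℝ) + 1) :=
        Real.rpow_lt_rpow_of_exponent_lt one_lt_two h1
      rw [Real.rpow_logb two_pos (by norm_num) ht0] at h2
      rwa [show ((n : ℝ) + 1) = ((n + 1 : ℕ) : ℝ) by push_cast; ring,
        Real.rpow_natCast] at h2
    have hnN : n < N + 1 := by
      have h1 : Real.logb 2 (1 + ‖y‖) ≤ Real.logb 2 (1 + ρ / ε) :=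
        (Real.logb_le_logb one_lt_two ht0 (by linarith)).2 (by linarith)
      have h2 : n ≤ N := le_trans (Nat.floor_mono h1) (Nat.floor_le_ceil _)
      omega
    exact Set.mem_biUnion (Finset.mem_range.2 hnN) ⟨hn1, hn2⟩
  have step1 : (∫ y in ball (0 : EuclideanSpace ℝ (Fin d)) (ρ / ε), (g y) ^ 2)
      ≤ ∑ n ∈ Finset.range (N + 1), ∫ y in A n, (g y) ^ 2 := by
    calc (∫ y in ball (0 : EuclideanSpace ℝ (Fin d)) (ρ / ε), (g y) ^ 2)
        ≤ ∫ y in ⋃ n ∈ Finset.range (N + 1), A n, (g y) ^ 2 :=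
          setIntegral_mono_set hIntUnion
            (Filter.Eventually.of_forall fun y => sq_nonneg (g y))
            (HasSubset.Subset.eventuallyLE hCover)
      _ = ∑ n ∈ Finset.range (N + 1), ∫ y in A n, (g y) ^ 2 :=
          integral_biUnion_finset _ (fun n _ => hAmeas n)
            (fun a _ b _ hab => hAdisj hab) (fun n _ => hIntA n)
  have step2 : ∀ n : ℕ, (∫ y in A n, (g y) ^ 2)
      ≤ K * ((2 : ℝ) ^ ((2 : ℝ) - (d : ℝ))) ^ n := by
    intro n
    have hc : ∀ y ∈ A n, (g y) ^ 2 ≤ Cg ^ 2 * ((2 : ℝ) ^ n) ^ ((2 : ℝ) - 2 * d) := by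
      intro y hy
      refine (sq_le_rpow g Cg hgbd y).trans ?_
      refine mul_le_mul_of_nonneg_left ?_ (by positivity)
      refine Real.rpow_le_rpow_of_nonpos (by positivity) hy.1 ?_
      have : (2 : ℝ) ≤ (d : ℝ) := by exact_mod_cast hd
      linarith
    have h5 := setIntegral_mono_on (hIntA n)
      (integrableOn_const (hAfin n).ne) (hAmeas n) hc
    rw [setIntegral_const, smul_eq_mul] at h5
    have h6 : (volume (A n)).toReal * (Cg ^ 2 * ((2 : ℝ) ^ n) ^ ((2 : ℝ) - 2 * d))
        ≤ ((2 : ℝ) ^ (n + 1)) ^ d * V1 * (Cg ^ 2 * ((2 : ℝ) ^ n) ^ ((2 : ℝ) - 2 * d)) :=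
      mul_le_mul_of_nonneg_right (hAvol n) (by positivity)
    refine h5.trans (h6.trans (le_of_eq ?_))
    have e1 : ((2 : ℝ) ^ (n + 1)) ^ d = (2 : ℝ) ^ (((n : ℝ) + 1) * (d : ℝ)) := by
      rw [← Real.rpow_natCast (2 : ℝ) (n + 1), ← Real.rpow_natCast _ d,
        ← Real.rpow_mul (by norm_num : (0 : ℝ) ≤ 2)]
      congr 1
      push_cast
      ring
    have e2 : ((2 : ℝ) ^ n) ^ ((2 : ℝ) - 2 * (d : ℝ)) = (2 : ℝ) ^ ((n : ℝ) * ((2 : ℝ) - 2 * d)) := by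
      rw [← Real.rpow_natCast (2 : ℝ) n, ← Real.rpow_mul (by norm_num : (0 : ℝ) ≤ 2)]
    have e3 : ((2 : ℝ) ^ ((2 : ℝ) - (d : ℝ))) ^ n = (2 : ℝ) ^ (((2 : ℝ) - (d : ℝ)) * (n : ℝ)) := by
      rw [← Real.rpow_natCast ((2 : ℝ) ^ ((2 : ℝ) - (d : ℝ))) n,
        ← Real.rpow_mul (by norm_num : (0 : ℝ) ≤ 2)]
    have e4 : (2 : ℝ) ^ d = (2 : ℝ) ^ ((d : ℝ)) := (Real.rpow_natCast 2 d).symm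
    have e5 : (2 : ℝ) ^ (((n : ℝ) + 1) * (d : ℝ)) * (2 : ℝ) ^ ((n : ℝ) * ((2 : ℝ) - 2 * d))
        = (2 : ℝ) ^ ((d : ℝ)) * (2 : ℝ) ^ (((2 : ℝ) - (d : ℝ)) * (n : ℝ)) := by
      rw [← Real.rpow_add (by norm_num : (0 : ℝ) < 2),
        ← Real.rpow_add (by norm_num : (0 : ℝ) < 2)]
      congr 1
      ring
    rw [hKdef, e1, e2, e3, e4]
    calc (2 : ℝ) ^ (((n : ℝ) + 1) * (d : ℝ)) * V1 * (Cg ^ 2 * (2 : ℝ) ^ ((n : ℝ) * ((2 : ℝ) - 2 * (d : ℝ))))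
        = Cg ^ 2 * V1 * ((2 : ℝ) ^ (((n : ℝ) + 1) * (d : ℝ)) * (2 : ℝ) ^ ((n : ℝ) * ((2 : ℝ) - 2 * (d : ℝ)))) := by ring
      _ = Cg ^ 2 * V1 * ((2 : ℝ) ^ ((d : ℝ)) * (2 : ℝ) ^ (((2 : ℝ) - (d : ℝ)) * (n : ℝ))) := by rw [e5]
      _ = Cg ^ 2 * (2 : ℝ) ^ ((d : ℝ)) * V1 * (2 : ℝ) ^ (((2 : ℝ) - (d : ℝ)) * (n : ℝ)) := by
          ring
  have step3 : (∫ y in ball (0 : EuclideanSpace ℝ (Fin d)) (ρ / ε), (g y) ^ 2)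
      ≤ K * ∑ n ∈ Finset.range (N + 1), ((2 : ℝ) ^ ((2 : ℝ) - (d : ℝ))) ^ n := by
    rw [Finset.mul_sum]
    exact step1.trans (Finset.sum_le_sum fun n _ => step2 n)
  by_cases hd2 : d = 2
  · subst hd2
    rw [if_pos rfl]
    have hq : ((2 : ℝ) ^ ((2 : ℝ) - ((2 : ℕ) : ℝ))) = 1 := by
      norm_num
    have hsum : ∑ n ∈ Finset.range (N + 1), ((2 : ℝ) ^ ((2 : ℝ) - ((2 : ℕ) : ℝ))) ^ n
        = (N : ℝ) + 1 := by
      simp [hq]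
    rw [hsum] at step3
    -- now bound (N : ℝ) + 1 ≤ K2 * (1 + L)
    have hN1 : (N : ℝ) < Real.logb 2 (1 + ρ / ε) + 1 :=
      Nat.ceil_lt_add_one (Real.logb_nonneg one_lt_two (by linarith))
    have hloglog : Real.logb 2 (1 + ρ / ε) ≤ (Real.log (1 + ρ) + L) / Real.log 2 := by
      rw [Real.logb]
      have h1 : (1 : ℝ) + ρ / ε ≤ (1 + ρ) / ε := by
        rw [add_div]
        have h1ε' : (1 : ℝ) ≤ 1 / ε := by rw [le_div_iff₀ hε0]; linarith
        linarith
      have h2 : Real.log (1 + ρ / ε) ≤ Real.log ((1 + ρ) / ε) :=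
        Real.log_le_log (by positivity) h1
      have h3 : Real.log ((1 + ρ) / ε) = Real.log (1 + ρ) + L := by
        rw [Real.log_div (by positivity) hε0.ne', hLdef, one_div, Real.log_inv]
        ring
      rw [← h3]
      have h4 := mul_le_mul_of_nonneg_right h2 (le_of_lt (inv_pos.2 hlog2))
      simpa [div_eq_mul_inv] using h4
    have hN2 : (N : ℝ) + 1 ≤ (Real.log (1 + ρ) + L) / Real.log 2 + 2 := by linarith
    have hN3 : (Real.log (1 + ρ) + L) / Real.log 2 + 2 ≤ K2 * (1 + L) := by
      rw [hK2def, add_div]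
      have hac : 0 ≤ Real.log (1 + ρ) / Real.log 2 := div_nonneg hlogρ hlog2.le
      have hc : (0 : ℝ) < 1 / Real.log 2 := by positivity
      have hLc : L / Real.log 2 = 1 / Real.log 2 * L := by ring
      have expand : (Real.log (1 + ρ) / Real.log 2 + 1 / Real.log 2 + 2) * (1 + L)
          = Real.log (1 + ρ) / Real.log 2 + 1 / Real.log 2 + 2
            + (Real.log (1 + ρ) / Real.log 2) * L + (1 / Real.log 2) * L + 2 * L := by ring
      rw [expand, hLc]
      have := mul_nonneg hac hL
      have := mul_nonneg hc.le hL
      linarith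
    have hfin1 : K * ((N : ℝ) + 1) ≤ K * (K2 * (1 + L)) :=
      mul_le_mul_of_nonneg_left (hN2.trans hN3) hK.le
    have h22 : K2 * (1 + L) ≤ (K2 + 2) * (1 + L) :=
      mul_le_mul_of_nonneg_right (by linarith) (by linarith)
    have hfin2 : K * (K2 * (1 + L)) ≤ K * ((K2 + 2) * (1 + L)) :=
      mul_le_mul_of_nonneg_left h22 hK.le
    have hfin3 : K * ((K2 + 2) * (1 + L)) = K * (K2 + 2) * (1 + L) := by ring
    exact step3.trans (hfin1.trans (hfin2.trans (le_of_eq hfin3)))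
  · have hd3 : 3 ≤ d := by omega
    rw [if_neg hd2]
    have hqle : ((2 : ℝ) ^ ((2 : ℝ) - (d : ℝ))) ≤ 1 / 2 := by
      have h1 : ((2 : ℝ) - (d : ℝ)) ≤ -1 := by
        have : (3 : ℝ) ≤ (d : ℝ) := by exact_mod_cast hd3
        linarith
      have h2 := Real.rpow_le_rpow_of_exponent_le one_le_two h1
      rw [Real.rpow_neg_one] at h2
      linarith [h2]
    have hq0 : (0 : ℝ) ≤ (2 : ℝ) ^ ((2 : ℝ) - (d : ℝ)) :=
      le_of_lt (Real.rpow_pos_of_pos two_pos _)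
    have hsum : ∑ n ∈ Finset.range (N + 1), ((2 : ℝ) ^ ((2 : ℝ) - (d : ℝ))) ^ n ≤ 2 := by
      calc ∑ n ∈ Finset.range (N + 1), ((2 : ℝ) ^ ((2 : ℝ) - (d : ℝ))) ^ n
          ≤ ∑ n ∈ Finset.range (N + 1), ((1 : ℝ) / 2) ^ n :=
            Finset.sum_le_sum fun n _ => pow_le_pow_left₀ hq0 hqle n
        _ ≤ 2 := sum_geometric_two_le _
    have hfin1 : K * (∑ n ∈ Finset.range (N + 1), ((2 : ℝ) ^ ((2 : ℝ) - (d : ℝ))) ^ n) ≤ K * 2 :=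
      mul_le_mul_of_nonneg_left hsum hK.le
    have h22 : (2 : ℝ) ≤ K2 + 2 := by linarith
    have hfin2 : K * 2 ≤ K * (K2 + 2) := mul_le_mul_of_nonneg_left h22 hK.le
    rw [mul_one]
    exact step3.trans (hfin1.trans hfin2)




lemma coordB {d : ℕ} {ε M : ℝ} (hε : 0 < ε) {x : EuclideanSpace ℝ (Fin d)}
    (hx : ‖x‖ < M) {a : Fin d → ℤ} (h : ∀ i, |x i - ε * a i| < ε / 2) (i : Fin d) :
    |(a i : ℝ)| < M / ε + 1 / 2 := by
  have h1 : |x i| ≤ ‖x‖ := coord_le_norm x i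
  have h2 := h i
  have h3 : |ε * (a i : ℝ)| ≤ |x i - ε * a i| + |x i| := by
    calc |ε * (a i : ℝ)| = |x i - (x i - ε * a i)| := by congr 1; ring
      _ ≤ |x i| + |x i - ε * a i| := abs_sub _ _
      _ = |x i - ε * a i| + |x i| := add_comm _ _
  rw [abs_mul, abs_of_pos hε] at h3
  have h4 : ε * |(a i : ℝ)| < M + ε / 2 := by linarith
  have h5 : ε * (M / ε + 1 / 2) = M + ε / 2 := by field_simp
  refine lt_of_mul_lt_mul_left ?_ hε.le
  rw [h5]
  exact h4

lemma ucube_sub {d : ℕ} {ε M ρ : ℝ} (hε0 : 0 < ε) (hε1 : ε < 1) (hM : 0 < M)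
    (hρ : Real.sqrt d * (2 * M + 3) < ρ) {j k : Fin d → ℤ}
    (hj : ∀ i, |(j i : ℝ)| < M / ε + 1 / 2) (hk : ∀ i, |(k i : ℝ)| < M / ε + 1 / 2) :
    {y : EuclideanSpace ℝ (Fin d) | ∀ i, |y i - (((j - k) i : ℤ) : ℝ)| < 1 / 2}
      ⊆ ball (0 : EuclideanSpace ℝ (Fin d)) (ρ / ε) := by
  intro y hy
  rw [mem_ball_zero_iff]
  have hcoord : ∀ i, |y i| ≤ (2 * M + 3) / ε := by
    intro i
    have h1 := hy i
    have h2 : (((j - k) i : ℤ) : ℝ) = (j i : ℝ) - k i := by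
      push_cast [Pi.sub_apply]; ring
    rw [h2] at h1
    have h3 : |y i| ≤ |y i - ((j i : ℝ) - k i)| + |(j i : ℝ) - k i| := by
      have e : y i = (y i - ((j i : ℝ) - k i)) + ((j i : ℝ) - k i) := by ring
      nth_rewrite 1 [e]
      exact abs_add_le _ _
    have h4 : |(j i : ℝ) - k i| ≤ |(j i : ℝ)| + |(k i : ℝ)| := abs_sub _ _
    have h5 : (1 : ℝ) ≤ 1 / ε := by rw [le_div_iff₀ hε0]; linarith
    have h6 : |y i| < 1 / 2 + (M / ε + 1 / 2) + (M / ε + 1 / 2) := by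
      linarith [hj i, hk i]
    have h7 : (2 * M + 3) / ε = 2 * (M / ε) + 3 * (1 / ε) := by
      field_simp
    linarith
  have h8 := norm_le_of_coords (by positivity) hcoord
  calc ‖y‖ ≤ Real.sqrt d * ((2 * M + 3) / ε) := h8
    _ = Real.sqrt d * (2 * M + 3) / ε := by ring
    _ < ρ / ε := by
        rw [div_lt_div_iff₀ hε0 hε0]
        exact mul_lt_mul_of_pos_right hρ hε0

end BLaux


/-- Boundary-layer estimate: for `g` decaying like `(1+|y|)^{1-d}`, the sum over
cubes meeting `𝒟` of `∫_{𝒟_ε^c} g(x/ε − k)² dx` is bounded by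
`ε^d Card(J_ε) ∫_{B(0,ρ/ε)} g² ≤ C' ε R_{d,ε}`, with `R_{d,ε} = 1 + log(1/ε)`
if `d = 2` and `R_{d,ε} = 1` if `d ≥ 3`. -/
theorem boundary_layer_sum_estimate
    (d : ℕ) (hd : 2 ≤ d)
    (D : Set (EuclideanSpace ℝ (Fin d))) (hDo : IsOpen D)
    (hDb : Bornology.IsBounded D)
    (g : EuclideanSpace ℝ (Fin d) → ℝ) (hgm : Measurable g)
    (Cg : ℝ) (hCg : 0 < Cg)
    (hgbd : ∀ y, |g y| ≤ Cg * (1 + ‖y‖) ^ ((1 : ℝ) - d))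
    (CJ : ℝ) (hCJ : 0 < CJ)
    (hJcard : ∀ ε : ℝ, ε ∈ Set.Ioo (0 : ℝ) 1 →
      ({j : Fin d → ℤ | ∃ x ∈ D, infDist x (frontier D) < ε ∧
          ∀ i, |x i - ε * (j i : ℝ)| < ε / 2}.Finite ∧
       ({j : Fin d → ℤ | ∃ x ∈ D, infDist x (frontier D) < ε ∧
          ∀ i, |x i - ε * (j i : ℝ)| < ε / 2}.ncard : ℝ) ≤ CJ * ε ^ ((1 : ℝ) - d))) :
    ∃ ρ C' : ℝ, 0 < ρ ∧ 0 < C' ∧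
      ∀ ε : ℝ, ε ∈ Set.Ioo (0 : ℝ) 1 →
        (∑' k : {k : Fin d → ℤ | ∃ x ∈ D, ∀ i, |x i - ε * (k i : ℝ)| < ε / 2},
            ∫ x in {x ∈ D | infDist x (frontier D) < ε},
              (g (show EuclideanSpace ℝ (Fin d) from
                  WithLp.toLp 2 (fun i => x i / ε - ((k : Fin d → ℤ) i : ℝ)))) ^ 2)
          ≤ ε ^ d * ({j : Fin d → ℤ | ∃ x ∈ D, infDist x (frontier D) < ε ∧
              ∀ i, |x i - ε * (j i : ℝ)| < ε / 2}.ncard : ℝ)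
            * ∫ y in ball (0 : EuclideanSpace ℝ (Fin d)) (ρ / ε), (g y) ^ 2 ∧
        ε ^ d * ({j : Fin d → ℤ | ∃ x ∈ D, infDist x (frontier D) < ε ∧
              ∀ i, |x i - ε * (j i : ℝ)| < ε / 2}.ncard : ℝ)
            * (∫ y in ball (0 : EuclideanSpace ℝ (Fin d)) (ρ / ε), (g y) ^ 2)
          ≤ C' * ε * (if d = 2 then 1 + Real.log (1 / ε) else 1) := by
  classical
  obtain ⟨M, hM0, hMD⟩ := hDb.subset_ball_lt 0 0
  have hd0 : (0 : ℝ) < (d : ℝ) := by exact_mod_cast (by omega : 0 < d)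
  have hsqd : 0 < Real.sqrt d := Real.sqrt_pos.2 hd0
  set ρ : ℝ := Real.sqrt d * (2 * M + 3) + 1 with hρdef
  have hρlt : Real.sqrt d * (2 * M + 3) < ρ := by rw [hρdef]; linarith
  have hρ : 0 < ρ := by nlinarith [mul_pos hsqd (by linarith : (0:ℝ) < 2 * M + 3)]
  obtain ⟨CB, hCB, hCBbd⟩ := BLaux.ball_sq_integral_bound hd g hgm Cg hCg hgbd ρ hρ
  refine ⟨ρ, CJ * CB, hρ, by positivity, ?_⟩
  rintro ε ⟨hε0, hε1⟩
  obtain ⟨hJfin, hJle⟩ := hJcard ε ⟨hε0, hε1⟩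
  set Jf := hJfin.toFinset with hJfdef
  -- integrability of g² on the ball
  have hIball : IntegrableOn (fun y => (g y) ^ 2)
      (ball (0 : EuclideanSpace ℝ (Fin d)) (ρ / ε)) volume := by
    refine Measure.integrableOn_of_bounded measure_ball_lt_top.ne
      (hgm.pow_const 2).aestronglyMeasurable (M := Cg ^ 2)
      (Filter.Eventually.of_forall fun y => ?_)
    rw [Real.norm_eq_abs, abs_of_nonneg (sq_nonneg _)]
    exact BLaux.sq_le_const (by omega) g Cg hCg.le hgbd y
  have hIntNN : 0 ≤ ∫ y in ball (0 : EuclideanSpace ℝ (Fin d)) (ρ / ε), (g y) ^ 2 :=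
    integral_nonneg fun y => sq_nonneg _
  constructor
  · -- first inequality
    have hIcube : ∀ (k : Fin d → ℤ) (j : Fin d → ℤ),
        IntegrableOn (fun x : EuclideanSpace ℝ (Fin d) =>
            (g (show EuclideanSpace ℝ (Fin d) from WithLp.toLp 2 (fun i => x i / ε - (k i : ℝ)))) ^ 2)
          {x : EuclideanSpace ℝ (Fin d) | ∀ i, |x i - ε * (j i : ℝ)| < ε / 2} volume := by
      intro k j
      refine Measure.integrableOn_of_bounded
        (BLaux.cube_vol_lt_top (fun i => ε * (j i : ℝ)) (by positivity : (0:ℝ) ≤ ε / 2)).ne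
        (((hgm.comp (BLaux.phi_meas ε k)).pow_const 2).aestronglyMeasurable)
        (M := Cg ^ 2) (Filter.Eventually.of_forall fun x => ?_)
      rw [Real.norm_eq_abs, abs_of_nonneg (sq_nonneg _)]
      exact BLaux.sq_le_const (by omega) g Cg hCg.le hgbd _
    have key : ∀ u : Finset {k : Fin d → ℤ | ∃ x ∈ D, ∀ i, |x i - ε * (k i : ℝ)| < ε / 2},
        ∑ k ∈ u, (∫ x in {x ∈ D | infDist x (frontier D) < ε},
            (g (show EuclideanSpace ℝ (Fin d) from
                WithLp.toLp 2 (fun i => x i / ε - ((k : Fin d → ℤ) i : ℝ)))) ^ 2)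
          ≤ ε ^ d * ({j : Fin d → ℤ | ∃ x ∈ D, infDist x (frontier D) < ε ∧
              ∀ i, |x i - ε * (j i : ℝ)| < ε / 2}.ncard : ℝ)
            * ∫ y in ball (0 : EuclideanSpace ℝ (Fin d)) (ρ / ε), (g y) ^ 2 := by
      intro u
      have step1 : ∀ k : {k : Fin d → ℤ | ∃ x ∈ D, ∀ i, |x i - ε * (k i : ℝ)| < ε / 2},
          (∫ x in {x ∈ D | infDist x (frontier D) < ε},
              (g (show EuclideanSpace ℝ (Fin d) from
                  WithLp.toLp 2 (fun i => x i / ε - ((k : Fin d → ℤ) i : ℝ)))) ^ 2)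
            ≤ ∑ j ∈ Jf, ∫ x in {x : EuclideanSpace ℝ (Fin d) |
                ∀ i, |x i - ε * (j i : ℝ)| < ε / 2},
              (g (show EuclideanSpace ℝ (Fin d) from
                  WithLp.toLp 2 (fun i => x i / ε - ((k : Fin d → ℤ) i : ℝ)))) ^ 2 := by
        intro k
        have hIntCube : ∀ j ∈ Jf, IntegrableOn
            (fun x : EuclideanSpace ℝ (Fin d) =>
              (g (show EuclideanSpace ℝ (Fin d) from
                  WithLp.toLp 2 (fun i => x i / ε - ((k : Fin d → ℤ) i : ℝ)))) ^ 2)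
            {x : EuclideanSpace ℝ (Fin d) | ∀ i, |x i - ε * (j i : ℝ)| < ε / 2} volume :=
          fun j _ => hIcube (↑k) j
        have hIntU : IntegrableOn
            (fun x : EuclideanSpace ℝ (Fin d) =>
              (g (show EuclideanSpace ℝ (Fin d) from
                  WithLp.toLp 2 (fun i => x i / ε - ((k : Fin d → ℤ) i : ℝ)))) ^ 2)
            (⋃ j ∈ Jf, {x : EuclideanSpace ℝ (Fin d) |
                ∀ i, |x i - ε * (j i : ℝ)| < ε / 2}) volume :=
          integrableOn_finset_iUnion.2 hIntCube
        have hsub : {x ∈ D | infDist x (frontier D) < ε}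
            \ (⋃ j ∈ Jf, {x : EuclideanSpace ℝ (Fin d) |
                ∀ i, |x i - ε * (j i : ℝ)| < ε / 2}) ⊆ BLaux.bad d ε := by
          rintro x ⟨hx1, hx2⟩
          by_contra hxB
          obtain ⟨j, hj⟩ := BLaux.round_of_not_bad hε0 hxB
          exact hx2 (Set.mem_biUnion ((hJfin.mem_toFinset).2 ⟨x, hx1.1, hx1.2, hj⟩) hj)
        have hae : {x ∈ D | infDist x (frontier D) < ε}
            ≤ᵐ[volume] ⋃ j ∈ Jf, {x : EuclideanSpace ℝ (Fin d) |
                ∀ i, |x i - ε * (j i : ℝ)| < ε / 2} :=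
          (ae_le_set).2 (measure_mono_null hsub (BLaux.bad_null d ε))
        calc (∫ x in {x ∈ D | infDist x (frontier D) < ε},
                (g (show EuclideanSpace ℝ (Fin d) from
                    WithLp.toLp 2 (fun i => x i / ε - ((k : Fin d → ℤ) i : ℝ)))) ^ 2)
            ≤ ∫ x in ⋃ j ∈ Jf, {x : EuclideanSpace ℝ (Fin d) |
                  ∀ i, |x i - ε * (j i : ℝ)| < ε / 2},
                (g (show EuclideanSpace ℝ (Fin d) from
                    WithLp.toLp 2 (fun i => x i / ε - ((k : Fin d → ℤ) i : ℝ)))) ^ 2 :=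
              setIntegral_mono_set hIntU
                (Filter.Eventually.of_forall fun x => sq_nonneg _) hae
          _ = ∑ j ∈ Jf, ∫ x in {x : EuclideanSpace ℝ (Fin d) |
                  ∀ i, |x i - ε * (j i : ℝ)| < ε / 2},
                (g (show EuclideanSpace ℝ (Fin d) from
                    WithLp.toLp 2 (fun i => x i / ε - ((k : Fin d → ℤ) i : ℝ)))) ^ 2 :=
              integral_biUnion_finset Jf
                (fun j _ => BLaux.cube_meas (fun i => ε * (j i : ℝ)) (ε / 2))
                (fun a _ b _ hab => BLaux.cube_disjoint hε0 hab) hIntCube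
      calc ∑ k ∈ u, (∫ x in {x ∈ D | infDist x (frontier D) < ε},
              (g (show EuclideanSpace ℝ (Fin d) from
                  WithLp.toLp 2 (fun i => x i / ε - ((k : Fin d → ℤ) i : ℝ)))) ^ 2)
          ≤ ∑ k ∈ u, ∑ j ∈ Jf, ∫ x in {x : EuclideanSpace ℝ (Fin d) |
                ∀ i, |x i - ε * (j i : ℝ)| < ε / 2},
              (g (show EuclideanSpace ℝ (Fin d) from
                  WithLp.toLp 2 (fun i => x i / ε - ((k : Fin d → ℤ) i : ℝ)))) ^ 2 :=
            Finset.sum_le_sum fun k _ => step1 k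
        _ = ∑ j ∈ Jf, ∑ k ∈ u, ∫ x in {x : EuclideanSpace ℝ (Fin d) |
                ∀ i, |x i - ε * (j i : ℝ)| < ε / 2},
              (g (show EuclideanSpace ℝ (Fin d) from
                  WithLp.toLp 2 (fun i => x i / ε - ((k : Fin d → ℤ) i : ℝ)))) ^ 2 := Finset.sum_comm
        _ = ∑ j ∈ Jf, ∑ k ∈ u, ε ^ d * ∫ y in {y : EuclideanSpace ℝ (Fin d) |
                ∀ i, |y i - (((j - (k : Fin d → ℤ)) i : ℤ) : ℝ)| < 1 / 2}, (g y) ^ 2 := by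
            refine Finset.sum_congr rfl fun j _ => Finset.sum_congr rfl fun k _ => ?_
            rw [BLaux.cube_preimage hε0 j (↑k)]
            exact BLaux.cov hε0 (↑k) _
              (BLaux.cube_meas (fun i => (((j - (k : Fin d → ℤ)) i : ℤ) : ℝ)) (1 / 2))
              (fun y => (g y) ^ 2) (hgm.pow_const 2)
        _ ≤ ∑ _j ∈ Jf, (ε ^ d *
              ∫ y in ball (0 : EuclideanSpace ℝ (Fin d)) (ρ / ε), (g y) ^ 2) := by
            refine Finset.sum_le_sum fun j hj => ?_
            rw [← Finset.mul_sum]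
            refine mul_le_mul_of_nonneg_left ?_ (pow_nonneg hε0.le d)
            -- disjointness of the unit cubes
            have hdisj : (↑u : Set _).Pairwise (Function.onFun Disjoint
                fun k : {k : Fin d → ℤ | ∃ x ∈ D, ∀ i, |x i - ε * (k i : ℝ)| < ε / 2} =>
                  {y : EuclideanSpace ℝ (Fin d) |
                    ∀ i, |y i - (((j - (k : Fin d → ℤ)) i : ℤ) : ℝ)| < 1 / 2}) := by
              intro a _ b _ hab
              apply BLaux.ucube_disjoint
              intro hcontra
              apply hab
              apply Subtype.ext
              funext i
              have hc := congrFun hcontra i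
              simp only [Pi.sub_apply] at hc
              omega
            have hIntUcube : ∀ k ∈ u, IntegrableOn (fun y => (g y) ^ 2)
                {y : EuclideanSpace ℝ (Fin d) |
                  ∀ i, |y i - (((j - (k : Fin d → ℤ)) i : ℤ) : ℝ)| < 1 / 2} volume := by
              intro k _
              refine Measure.integrableOn_of_bounded
                (BLaux.cube_vol_lt_top _ (by norm_num : (0:ℝ) ≤ 1 / 2)).ne
                (hgm.pow_const 2).aestronglyMeasurable (M := Cg ^ 2)
                (Filter.Eventually.of_forall fun y => ?_)
              rw [Real.norm_eq_abs, abs_of_nonneg (sq_nonneg _)]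
              exact BLaux.sq_le_const (by omega) g Cg hCg.le hgbd y
            have hsubball : ∀ k ∈ u,
                {y : EuclideanSpace ℝ (Fin d) |
                  ∀ i, |y i - (((j - (k : Fin d → ℤ)) i : ℤ) : ℝ)| < 1 / 2}
                  ⊆ ball (0 : EuclideanSpace ℝ (Fin d)) (ρ / ε) := by
              intro k _
              obtain ⟨xj, hxjD, _, hxj⟩ := (hJfin.mem_toFinset).1 hj
              obtain ⟨xk, hxkD, hxk⟩ := k.2
              refine BLaux.ucube_sub hε0 hε1 hM0 hρlt
                (fun i => BLaux.coordB hε0 (mem_ball_zero_iff.1 (hMD hxjD)) hxj i)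
                (fun i => BLaux.coordB hε0 (mem_ball_zero_iff.1 (hMD hxkD)) hxk i)
            calc ∑ k ∈ u, ∫ y in {y : EuclideanSpace ℝ (Fin d) |
                    ∀ i, |y i - (((j - (k : Fin d → ℤ)) i : ℤ) : ℝ)| < 1 / 2}, (g y) ^ 2
                = ∫ y in ⋃ k ∈ u, {y : EuclideanSpace ℝ (Fin d) |
                    ∀ i, |y i - (((j - (k : Fin d → ℤ)) i : ℤ) : ℝ)| < 1 / 2}, (g y) ^ 2 :=
                  (integral_biUnion_finset u (fun k _ => BLaux.cube_meas _ _)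
                    hdisj hIntUcube).symm
              _ ≤ ∫ y in ball (0 : EuclideanSpace ℝ (Fin d)) (ρ / ε), (g y) ^ 2 :=
                  setIntegral_mono_set hIball
                    (Filter.Eventually.of_forall fun y => sq_nonneg _)
                    (HasSubset.Subset.eventuallyLE (Set.iUnion₂_subset hsubball))
        _ = ε ^ d * ({j : Fin d → ℤ | ∃ x ∈ D, infDist x (frontier D) < ε ∧
              ∀ i, |x i - ε * (j i : ℝ)| < ε / 2}.ncard : ℝ)
            * ∫ y in ball (0 : EuclideanSpace ℝ (Fin d)) (ρ / ε), (g y) ^ 2 := by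
            rw [Finset.sum_const, nsmul_eq_mul, Set.ncard_eq_toFinset_card _ hJfin]
            ring
    exact Summable.tsum_le_of_sum_le
      (summable_of_sum_le (fun k => integral_nonneg fun x => sq_nonneg _) key) key
  · -- second inequality
    have h1 : ε ^ d * ({j : Fin d → ℤ | ∃ x ∈ D, infDist x (frontier D) < ε ∧
          ∀ i, |x i - ε * (j i : ℝ)| < ε / 2}.ncard : ℝ)
        * (∫ y in ball (0 : EuclideanSpace ℝ (Fin d)) (ρ / ε), (g y) ^ 2)
        ≤ ε ^ d * (CJ * ε ^ ((1 : ℝ) - d))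
          * (∫ y in ball (0 : EuclideanSpace ℝ (Fin d)) (ρ / ε), (g y) ^ 2) :=
      mul_le_mul_of_nonneg_right
        (mul_le_mul_of_nonneg_left hJle (pow_nonneg hε0.le d)) hIntNN
    have h2 : ε ^ d * (CJ * ε ^ ((1 : ℝ) - d)) = CJ * ε := by
      have h3 : ε ^ ((d : ℕ) : ℝ) * ε ^ ((1 : ℝ) - d) = ε := by
        rw [← Real.rpow_add hε0, show ((d : ℕ) : ℝ) + ((1 : ℝ) - d) = 1 by ring,
          Real.rpow_one]
      calc ε ^ d * (CJ * ε ^ ((1 : ℝ) - d))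
          = CJ * (ε ^ ((d : ℕ) : ℝ) * ε ^ ((1 : ℝ) - d)) := by
            rw [Real.rpow_natCast]; ring
        _ = CJ * ε := by rw [h3]
    rw [h2] at h1
    have h4 : (CJ * ε) * (∫ y in ball (0 : EuclideanSpace ℝ (Fin d)) (ρ / ε), (g y) ^ 2)
        ≤ (CJ * ε) * (CB * (if d = 2 then 1 + Real.log (1 / ε) else 1)) :=
      mul_le_mul_of_nonneg_left (hCBbd ε ⟨hε0, hε1⟩) (by positivity)
    calc ε ^ d * ({j : Fin d → ℤ | ∃ x ∈ D, infDist x (frontier D) < ε ∧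
            ∀ i, |x i - ε * (j i : ℝ)| < ε / 2}.ncard : ℝ)
          * (∫ y in ball (0 : EuclideanSpace ℝ (Fin d)) (ρ / ε), (g y) ^ 2)
        ≤ (CJ * ε) * (∫ y in ball (0 : EuclideanSpace ℝ (Fin d)) (ρ / ε), (g y) ^ 2) := h1
      _ ≤ (CJ * ε) * (CB * (if d = 2 then 1 + Real.log (1 / ε) else 1)) := h4
      _ = (CJ * CB) * ε * (if d = 2 then 1 + Real.log (1 / ε) else 1) := by ring
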